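/- arXiv:2304.07033 — 5 statements merged into one kernel-verified Lean document; each statement's English description precedes it below -/
import Mathlib

section
/- For every finite-state walk on ℤ² there exist a finite set R ⊆ ℤ × ℤ and a vector d ∈ ℤ × ℤ such that every visited cell lies in the half-band HB(R, d), i.e. for every n ∈ ℕ there are k ∈ ℕ and r ∈ R with x n = r + k • d. (The exploration power of one ant is at most a half-band.) -/
open Pointwise

/-- The five allowed moves of an agent on the integer lattice:
stay put, east, west, north, south. -/
def Moves : Set (ℤ × ℤ) := {(0, 0), (1, 0), (-1, 0), (0, 1), (0, -1)}

/-- The half-band generated by a set `R` of cells and a drift vector `d`. -/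
def HB (R : Set (ℤ × ℤ)) (d : ℤ × ℤ) : Set (ℤ × ℤ) :=
  ⋃ k : ℕ, (k • d) +ᵥ R

/-- The exploration power of one ant is at most a half-band: every cell visited
by a finite-state walk lies in a half-band `HB R d` with `R` finite. -/
theorem walk_subset_halfBand {Q : Type} [Fintype Q] [Nonempty Q]
    (δ : Q → Q × (ℤ × ℤ)) (hδ : ∀ q, (δ q).2 ∈ Moves)
    (q₀ : Q) (o : ℤ × ℤ)
    (s : ℕ → Q) (x : ℕ → ℤ × ℤ)
    (hs0 : s 0 = q₀) (hs : ∀ n, s (n + 1) = (δ (s n)).1)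
    (hx0 : x 0 = o) (hx : ∀ n, x (n + 1) = x n + (δ (s n)).2) :
    ∃ (R : Set (ℤ × ℤ)) (d : ℤ × ℤ), R.Finite ∧
      ∀ n : ℕ, ∃ (k : ℕ) (r : ℤ × ℤ), r ∈ R ∧ x n = r + k • d := by
  -- find a repeated state
  obtain ⟨a, b, hab, hsab⟩ := Finite.exists_ne_map_eq_of_infinite s
  wlog h : a < b generalizing a b
  · exact this b a hab.symm hsab.symm (by omega)
  set m := a with hm
  set p := b - a with hp
  have hp0 : 0 < p := by omega
  have hmp : m + p = b := by omega
  have hsmp : s (m + p) = s m := by rw [hmp]; exact hsab.symm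
  -- periodicity of states
  have hsper : ∀ j, s (m + j + p) = s (m + j) := by
    intro j
    induction j with
    | zero => simpa using hsmp
    | succ j ih =>
        have e1 : m + (j + 1) + p = (m + j + p) + 1 := by omega
        rw [e1, hs, ih, ← hs]; congr 1
  -- displacement over one period
  set d := x (m + p) - x m with hd
  have hxper : ∀ j, x (m + j + p) = x (m + j) + d := by
    intro j
    induction j with
    | zero => simp [hd]
    | succ j ih =>
        have e1 : m + (j + 1) + p = (m + j + p) + 1 := by omega
        have e2 : m + (j + 1) = (m + j) + 1 := by omega
        rw [e1, hx, ih, hsper, e2, hx]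
        ring
  refine ⟨x '' Set.Iio (m + p), d, (Set.finite_Iio _).image x, ?_⟩
  intro n
  induction n using Nat.strong_induction_on with
  | _ n ih =>
    by_cases hn : n < m + p
    · exact ⟨0, x n, ⟨n, hn, rfl⟩, by simp⟩
    · push_neg at hn
      obtain ⟨k, r, hr, hxr⟩ := ih (n - p) (by omega)
      have e : m + (n - p - m) + p = n := by omega
      have e2 : m + (n - p - m) = n - p := by omega
      have := hxper (n - p - m)
      rw [e, e2, hxr] at this
      exact ⟨k + 1, r, hr, by rw [this]; push_cast; rw [add_smul]; ring⟩
end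

section
/- For every finite-state walk on ℤ² there exist a vector d ∈ ℤ × ℤ and a constant C ≥ 0 such that for every n ∈ ℕ there is a real t ≥ 0 with ‖(x n : ℝ × ℝ) − (x 0 : ℝ × ℝ) − t • (d : ℝ × ℝ)‖ ≤ C. (A lone agent's trajectory stays within a bounded distance of a fixed ray from its start cell, i.e. within a band of bounded width.) -/
/-- Coercion of an integer lattice point into the real plane. -/
def toR (z : ℤ × ℤ) : ℝ × ℝ := ((z.1 : ℝ), (z.2 : ℝ))

lemma toR_add (a b : ℤ × ℤ) : toR (a + b) = toR a + toR b := by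
  simp [toR, Prod.ext_iff]

lemma toR_nsmul (k : ℕ) (a : ℤ × ℤ) : toR (k • a) = (k : ℝ) • toR a := by
  simp [toR, Prod.ext_iff]

/-- A lone agent's trajectory stays within a bounded distance of a fixed ray
from its start cell. -/
theorem walk_near_ray {Q : Type} [Fintype Q] [Nonempty Q]
    (δ : Q → Q × (ℤ × ℤ)) (hδ : ∀ q, (δ q).2 ∈ Moves)
    (q₀ : Q) (o : ℤ × ℤ)
    (s : ℕ → Q) (x : ℕ → ℤ × ℤ)
    (hs0 : s 0 = q₀) (hs : ∀ n, s (n + 1) = (δ (s n)).1)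
    (hx0 : x 0 = o) (hx : ∀ n, x (n + 1) = x n + (δ (s n)).2) :
    ∃ (d : ℤ × ℤ) (C : ℝ), 0 ≤ C ∧
      ∀ n : ℕ, ∃ t : ℝ, 0 ≤ t ∧ ‖toR (x n) - toR (x 0) - t • toR d‖ ≤ C := by
  obtain ⟨a, b, hab, hsab⟩ := Finite.exists_ne_map_eq_of_infinite s
  obtain ⟨i, j, hij, hsij⟩ : ∃ i j, i < j ∧ s i = s j := by
    rcases hab.lt_or_gt with h | h
    · exact ⟨a, b, h, hsab⟩
    · exact ⟨b, a, h, hsab.symm⟩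
  set p := j - i with hp
  have hp1 : 0 < p := by omega
  -- states are periodic from i on
  have hsm : ∀ m, s (i + m) = s (j + m) := by
    intro m; induction m with
    | zero => simpa using hsij
    | succ m ih =>
        rw [show i + (m + 1) = (i + m) + 1 by ring, hs,
            show j + (m + 1) = (j + m) + 1 by ring, hs, ih]
  -- displacement over one period is constant
  have hxm : ∀ m, x (j + m) = x (i + m) + (x j - x i) := by
    intro m; induction m with
    | zero => simp
    | succ m ih =>
        rw [show i + (m + 1) = (i + m) + 1 by ring, hx,
            show j + (m + 1) = (j + m) + 1 by ring, hx, ih, hsm m]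
        abel
  have hstep : ∀ n, i ≤ n → x (n + p) = x n + (x j - x i) := by
    intro n hn
    have h := hxm (n - i)
    rwa [show j + (n - i) = n + p by omega, show i + (n - i) = n by omega] at h
  -- decomposition of any position
  have main : ∀ n, ∃ (k : ℕ) (m : ℕ), m ≤ j ∧ x n = x m + k • (x j - x i) := by
    intro n; induction n using Nat.strong_induction_on with
    | _ n ih =>
      by_cases h : n ≤ j
      · exact ⟨0, n, h, by simp⟩
      · obtain ⟨k, m, hm, hx'⟩ := ih (n - p) (by omega)
        refine ⟨k + 1, m, hm, ?_⟩
        have h2 := hstep (n - p) (by omega)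
        rw [show n - p + p = n by omega] at h2
        rw [h2, hx', succ_nsmul]; abel
  -- choose the ray and the constant
  set f : ℕ → ℝ := fun m => ‖toR (x m) - toR (x 0)‖ with hf
  refine ⟨x j - x i, (Finset.range (j + 1)).sup' (by simp) f, ?_, ?_⟩
  · exact le_trans (by simp [hf]) (Finset.le_sup' f (by simp : 0 ∈ Finset.range (j + 1)))
  · intro n
    obtain ⟨k, m, hm, hxn⟩ := main n
    refine ⟨(k : ℝ), by positivity, ?_⟩
    have : toR (x n) - toR (x 0) - (k : ℝ) • toR (x j - x i)
        = toR (x m) - toR (x 0) := by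
      rw [hxn, toR_add, toR_nsmul]; abel
    rw [this]
    exact Finset.le_sup' f (by simp [Nat.lt_succ_iff, hm] : m ∈ Finset.range (j + 1))
end

section
/- For every m ∈ ℕ, every family of finite sets R i ⊆ ℤ × ℤ and vectors d i ∈ ℤ × ℤ indexed by i ∈ Fin m, the complement in ℤ × ℤ of the union ⋃_{i} HB(R i, d i) is infinite. (Finitely many half-bands, in particular the three independent half-bands explored by three non-communicating agents, never cover the integer lattice.) -/
open Pointwise

/-- Finitely many half-bands never cover the integer lattice: the complement of
their union is infinite. -/
theorem finitely_many_halfBands_complement_infinite (m : ℕ)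
    (R : Fin m → Set (ℤ × ℤ)) (hR : ∀ i, (R i).Finite) (d : Fin m → ℤ × ℤ) :
    (⋃ i : Fin m, HB (R i) (d i))ᶜ.Infinite := by
  set M : ℤ := ((Finset.univ.sup fun i => (d i).2.natAbs : ℕ) : ℤ) + 1 with hM
  have hMpos : 0 < M := by positivity
  set f : ℤ → ℤ × ℤ := fun n => (n, n * M) with hf
  have hfinj : Function.Injective f := by
    intro a b h
    exact congrArg Prod.fst h
  have hkey : ∀ i, (f ⁻¹' HB (R i) (d i)).Finite := by
    intro i
    have hsub : f ⁻¹' HB (R i) (d i) ⊆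
        ⋃ r ∈ R i, {n : ℤ | ∃ k : ℕ, f n = (k : ℤ) • (d i) + r} := by
      intro n hn
      simp only [HB, Set.mem_preimage, Set.mem_iUnion] at hn
      obtain ⟨k, hk⟩ := hn
      rw [Set.mem_vadd_set] at hk
      obtain ⟨r, hr, hrk⟩ := hk
      refine Set.mem_biUnion hr ⟨k, ?_⟩
      simpa [vadd_eq_add] using hrk.symm
    refine Set.Finite.subset ?_ hsub
    refine Set.Finite.biUnion (hR i) ?_
    intro r _
    refine Set.Subsingleton.finite ?_
    intro a ha b hb
    obtain ⟨k₁, hk₁⟩ := ha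
    obtain ⟨k₂, hk₂⟩ := hb
    have h1 : a = (k₁ : ℤ) * (d i).1 + r.1 ∧ a * M = (k₁ : ℤ) * (d i).2 + r.2 := by
      simpa [hf, Prod.ext_iff, zsmul_eq_mul] using hk₁
    have h2 : b = (k₂ : ℤ) * (d i).1 + r.1 ∧ b * M = (k₂ : ℤ) * (d i).2 + r.2 := by
      simpa [hf, Prod.ext_iff, zsmul_eq_mul] using hk₂
    have e1 : a - b = ((k₁ : ℤ) - k₂) * (d i).1 := by linear_combination h1.1 - h2.1
    have e2 : (a - b) * M = ((k₁ : ℤ) - k₂) * (d i).2 := by linear_combination h1.2 - h2.2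
    by_cases hd1 : (d i).1 = 0
    · have : a - b = 0 := by rw [e1, hd1, mul_zero]
      linarith
    · have hMd : M * (d i).1 ≠ (d i).2 := by
        intro hcon
        have h2le : |(d i).2| ≤ M - 1 := by
          have h := Finset.le_sup (f := fun i => (d i).2.natAbs) (Finset.mem_univ i)
          have h' : (((d i).2.natAbs : ℤ)) ≤ ((Finset.univ.sup fun i => (d i).2.natAbs : ℕ) : ℤ) := by
            exact_mod_cast h
          rw [hM, Int.abs_eq_natAbs]
          omega
        have h1ge : (1 : ℤ) ≤ |(d i).1| := by
          rcases lt_trichotomy ((d i).1) 0 with h | h | h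
          · rw [abs_of_neg h]; omega
          · exact absurd h hd1
          · rw [abs_of_pos h]; omega
        have hle : M ≤ |M * (d i).1| := by
          rw [abs_mul, abs_of_pos hMpos]
          nlinarith
        rw [hcon] at hle
        omega
      have hz : (a - b) * (M * (d i).1 - (d i).2) = 0 := by
        linear_combination (d i).1 * e2 - (d i).2 * e1
      rcases mul_eq_zero.mp hz with h | h
      · linarith
      · exact absurd (by linarith : M * (d i).1 = (d i).2) hMd
  have hfin : (f ⁻¹' ⋃ i, HB (R i) (d i)).Finite := by
    rw [Set.preimage_iUnion]
    exact Set.finite_iUnion hkey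
  have hinf : (f ⁻¹' (⋃ i, HB (R i) (d i))ᶜ).Infinite := by
    rw [Set.preimage_compl]
    exact Set.Finite.infinite_compl hfin
  exact Set.Infinite.mono (Set.image_preimage_subset f _) (hinf.image hfinj.injOn)
end

section
/- Given any three finite-state walks on ℤ² (each with its own finite state set, transition map, initial state and initial cell, with position sequences x₁, x₂, x₃), there exists a cell z ∈ ℤ × ℤ such that x₁ n ≠ z, x₂ n ≠ z and x₃ n ≠ z for all n ∈ ℕ. (Three deterministic constant-memory agents that never communicate cannot discover the integer lattice: some cell is never visited.) -/
/-- Every finite-state walk is eventually periodic: its trajectory is covered by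
finitely many rays `x m + k • v`. -/
lemma walk_structure {Q : Type} [Fintype Q]
    (δ : Q → Q × (ℤ × ℤ)) (s : ℕ → Q) (x : ℕ → ℤ × ℤ)
    (hs : ∀ n, s (n + 1) = (δ (s n)).1)
    (hx : ∀ n, x (n + 1) = x n + (δ (s n)).2) :
    ∃ T : ℕ, 0 < T ∧ ∃ v : ℤ × ℤ,
      ∀ n, ∃ m < T, ∃ k : ℕ, x n = x m + (k : ℤ) • v := by
  obtain ⟨a, b, hab, hsab⟩ := Finite.exists_ne_map_eq_of_infinite s
  obtain ⟨i, j, hij, hsij⟩ : ∃ i j, i < j ∧ s i = s j := by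
    rcases hab.lt_or_gt with h | h
    · exact ⟨a, b, h, hsab⟩
    · exact ⟨b, a, h, hsab.symm⟩
  set p := j - i with hp
  have hp0 : 0 < p := Nat.sub_pos_of_lt hij
  have hip : i + p = j := by omega
  have hper : ∀ n, s (i + n + p) = s (i + n) := by
    intro n
    induction n with
    | zero => simpa [hip] using hsij.symm
    | succ n ih =>
      have h1 : i + (n + 1) + p = (i + n + p) + 1 := by omega
      have h2 : i + (n + 1) = (i + n) + 1 := by omega
      rw [h1, hs, ih, h2, hs]
  set v := x (i + p) - x i with hv
  have hxper : ∀ n, x (i + n + p) = x (i + n) + v := by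
    intro n
    induction n with
    | zero => simp [hv]
    | succ n ih =>
      have h1 : i + (n + 1) + p = (i + n + p) + 1 := by omega
      have h2 : i + (n + 1) = (i + n) + 1 := by omega
      rw [h1, hx, ih, hper, h2, hx]
      abel
  have hxiter : ∀ k n, x (i + n + k * p) = x (i + n) + (k : ℤ) • v := by
    intro k
    induction k with
    | zero => intro n; simp
    | succ k ih =>
      intro n
      have h1 : i + n + (k + 1) * p = i + (n + k * p) + p := by ring
      have h2 : i + (n + k * p) = i + n + k * p := by ring
      rw [h1, hxper, h2, ih]
      push_cast
      rw [add_smul, one_smul]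
      abel
  refine ⟨i + p, by omega, v, fun n => ?_⟩
  by_cases hn : n < i + p
  · exact ⟨n, hn, 0, by simp⟩
  · push_neg at hn
    set R := (n - i) % p with hR
    set K := (n - i) / p with hK
    have hRp : R < p := Nat.mod_lt _ hp0
    have hKR : n = i + R + K * p := by
      have h2 : i + ((n - i) % p + p * ((n - i) / p)) = n := by
        rw [Nat.mod_add_div]; omega
      calc n = i + ((n - i) % p + p * ((n - i) / p)) := h2.symm
        _ = i + (n - i) % p + ((n - i) / p) * p := by ring
    exact ⟨i + R, by omega, K, by rw [hKR, hxiter]⟩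

/-- Three deterministic constant-memory agents that never communicate cannot
discover the integer lattice: some cell is never visited by any of them. -/
theorem three_walks_miss_a_cell
    {Q₁ Q₂ Q₃ : Type} [Fintype Q₁] [Nonempty Q₁] [Fintype Q₂] [Nonempty Q₂]
    [Fintype Q₃] [Nonempty Q₃]
    (δ₁ : Q₁ → Q₁ × (ℤ × ℤ)) (hδ₁ : ∀ q, (δ₁ q).2 ∈ Moves)
    (δ₂ : Q₂ → Q₂ × (ℤ × ℤ)) (hδ₂ : ∀ q, (δ₂ q).2 ∈ Moves)
    (δ₃ : Q₃ → Q₃ × (ℤ × ℤ)) (hδ₃ : ∀ q, (δ₃ q).2 ∈ Moves)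
    (q₁ : Q₁) (q₂ : Q₂) (q₃ : Q₃) (o₁ o₂ o₃ : ℤ × ℤ)
    (s₁ : ℕ → Q₁) (s₂ : ℕ → Q₂) (s₃ : ℕ → Q₃)
    (x₁ x₂ x₃ : ℕ → ℤ × ℤ)
    (hs₁0 : s₁ 0 = q₁) (hs₁ : ∀ n, s₁ (n + 1) = (δ₁ (s₁ n)).1)
    (hx₁0 : x₁ 0 = o₁) (hx₁ : ∀ n, x₁ (n + 1) = x₁ n + (δ₁ (s₁ n)).2)
    (hs₂0 : s₂ 0 = q₂) (hs₂ : ∀ n, s₂ (n + 1) = (δ₂ (s₂ n)).1)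
    (hx₂0 : x₂ 0 = o₂) (hx₂ : ∀ n, x₂ (n + 1) = x₂ n + (δ₂ (s₂ n)).2)
    (hs₃0 : s₃ 0 = q₃) (hs₃ : ∀ n, s₃ (n + 1) = (δ₃ (s₃ n)).1)
    (hx₃0 : x₃ 0 = o₃) (hx₃ : ∀ n, x₃ (n + 1) = x₃ n + (δ₃ (s₃ n)).2) :
    ∃ z : ℤ × ℤ, ∀ n : ℕ, x₁ n ≠ z ∧ x₂ n ≠ z ∧ x₃ n ≠ z := by
  obtain ⟨T₁, hT₁, v₁, h₁⟩ := walk_structure δ₁ s₁ x₁ hs₁ hx₁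
  obtain ⟨T₂, hT₂, v₂, h₂⟩ := walk_structure δ₂ s₂ x₂ hs₂ hx₂
  obtain ⟨T₃, hT₃, v₃, h₃⟩ := walk_structure δ₃ s₃ x₃ hs₃ hx₃
  -- choose an X avoiding all base first-coordinates
  obtain ⟨X, hX⟩ := Infinite.exists_notMem_finset
    (((Finset.range T₁).image fun m => (x₁ m).1) ∪
     ((Finset.range T₂).image fun m => (x₂ m).1) ∪
     ((Finset.range T₃).image fun m => (x₃ m).1))
  simp only [Finset.mem_union, Finset.mem_image, Finset.mem_range, not_or, not_exists] at hX
  obtain ⟨⟨hX1, hX2⟩, hX3⟩ := hX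
  -- each ray whose base avoids line X hits the line X in a finite set of y's
  have hit_fin : ∀ (a w : ℤ × ℤ), a.1 ≠ X →
      Set.Finite {y : ℤ | ∃ k : ℕ, a + (k : ℤ) • w = (X, y)} := by
    intro a w ha
    have comp : ∀ (k : ℤ) (y : ℤ), a + k • w = (X, y) ↔
        (a.1 + k * w.1 = X ∧ a.2 + k * w.2 = y) := by
      intro k y
      rw [Prod.ext_iff]
      simp [Prod.smul_def, smul_eq_mul]
    rcases eq_or_ne w.1 0 with hw | hw
    · convert Set.finite_empty
      ext y
      simp only [Set.mem_setOf_eq, Set.mem_empty_iff_false, iff_false, not_exists]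
      intro k hk
      rw [comp] at hk
      exact ha (by rw [← hk.1, hw, mul_zero, add_zero])
    · apply Set.Subsingleton.finite
      rintro y ⟨k, hk⟩ y' ⟨k', hk'⟩
      rw [comp] at hk hk'
      have hkk : (k : ℤ) = k' := by
        have := hk.1.trans hk'.1.symm
        have h2 : (k : ℤ) * w.1 = (k' : ℤ) * w.1 := by linarith
        exact mul_right_cancel₀ hw h2
      rw [← hk.2, ← hk'.2, hkk]
  have bad_fin : ∀ (T : ℕ) (w : ℤ × ℤ) (x : ℕ → ℤ × ℤ),
      (∀ m < T, (x m).1 ≠ X) →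
      Set.Finite {y : ℤ | ∃ m < T, ∃ k : ℕ, x m + (k : ℤ) • w = (X, y)} := by
    intro T w x hxX
    have hsub : {y : ℤ | ∃ m < T, ∃ k : ℕ, x m + (k : ℤ) • w = (X, y)} ⊆
        ⋃ m ∈ Finset.range T, {y : ℤ | ∃ k : ℕ, x m + (k : ℤ) • w = (X, y)} := by
      rintro y ⟨m, hm, hk⟩
      exact Set.mem_biUnion (Finset.mem_range.2 hm) hk
    exact Set.Finite.subset
      (Set.Finite.biUnion (Finset.finite_toSet _)
        fun m hm => hit_fin _ _ (hxX m (Finset.mem_range.1 hm))) hsub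
  have hB₁ := bad_fin T₁ v₁ x₁ (fun m hm h => hX1 m ⟨hm, h⟩)
  have hB₂ := bad_fin T₂ v₂ x₂ (fun m hm h => hX2 m ⟨hm, h⟩)
  have hB₃ := bad_fin T₃ v₃ x₃ (fun m hm h => hX3 m ⟨hm, h⟩)
  obtain ⟨Y, hY⟩ := ((hB₁.union hB₂).union hB₃).infinite_compl.nonempty
  simp only [Set.mem_compl_iff, Set.mem_union, not_or] at hY
  obtain ⟨⟨hY1, hY2⟩, hY3⟩ := hY
  refine ⟨(X, Y), fun n => ⟨?_, ?_, ?_⟩⟩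
  · intro h
    obtain ⟨m, hm, k, hk⟩ := h₁ n
    exact hY1 ⟨m, hm, k, by rw [← hk, h]⟩
  · intro h
    obtain ⟨m, hm, k, hk⟩ := h₂ n
    exact hY2 ⟨m, hm, k, by rw [← hk, h]⟩
  · intro h
    obtain ⟨m, hm, k, hk⟩ := h₃ n
    exact hY3 ⟨m, hm, k, by rw [← hk, h]⟩
end

section
/- There exists a unit-step lattice path x : ℕ → ℤ × ℤ with x 0 = (0, 0) and x (n+1) − x n ∈ {(1,0),(−1,0),(0,1),(0,−1)} for all n, whose range is exactly the wedge {(a, b) ∈ ℤ × ℤ : 0 ≤ b ∧ −b ≤ a ∧ a ≤ b}. (The explorer's trajectory in the wedge construction: bouncing left and right between the two diagonals, it visits precisely the cells of the wedge.) -/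
/-- The four unit moves on the integer lattice: east, west, north, south. -/
def UnitMoves : Set (ℤ × ℤ) := {(1, 0), (-1, 0), (0, 1), (0, -1)}

/-- Position within row `b` (for `b ≥ 1`), at phase index `j ∈ [0, 2b+1]`. -/
def wpos (b j : ℕ) : ℤ × ℤ :=
  if b % 2 = 1 then
    (if j = 0 then ((b : ℤ) - 1, b) else ((b : ℤ) - j + 1, b))
  else
    (if j = 0 then (1 - (b : ℤ), b) else ((j : ℤ) - 1 - b, b))

/-- Row index of step `n` (for `n ≥ 1`). -/
def wr (n : ℕ) : ℕ := (Nat.sqrt (4 * n + 5) - 1) / 2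

/-- The explorer path. -/
def wx (n : ℕ) : ℤ × ℤ :=
  if n = 0 then (0, 0) else wpos (wr n) (n - (wr n * wr n + wr n - 1))

lemma wr_eq (b j : ℕ) (hb : 1 ≤ b) (hj : j ≤ 2 * b + 1) :
    wr (b * b + b - 1 + j) = b := by
  have hbb : 1 * 1 ≤ b * b := Nat.mul_le_mul hb hb
  have e1 : (2 * b + 1) * (2 * b + 1) = 4 * (b * b) + 4 * b + 1 := by ring
  have e2 : (2 * b + 3) * (2 * b + 3) = 4 * (b * b) + 12 * b + 9 := by ring
  have h1 : (2 * b + 1) * (2 * b + 1) ≤ 4 * (b * b + b - 1 + j) + 5 := by omega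
  have h2 : 4 * (b * b + b - 1 + j) + 5 < (2 * b + 3) * (2 * b + 3) := by omega
  have l1 : 2 * b + 1 ≤ Nat.sqrt (4 * (b * b + b - 1 + j) + 5) := Nat.le_sqrt.mpr h1
  have l2 : Nat.sqrt (4 * (b * b + b - 1 + j) + 5) < 2 * b + 3 := Nat.sqrt_lt.mpr h2
  unfold wr
  omega

lemma decomp (n : ℕ) (h : 1 ≤ n) :
    ∃ b j, 1 ≤ b ∧ j ≤ 2 * b + 1 ∧ n = b * b + b - 1 + j := by
  set s := Nat.sqrt (4 * n + 5) with hs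
  have hs1 : s * s ≤ 4 * n + 5 := Nat.sqrt_le _
  have hs2 : 4 * n + 5 < (s + 1) * (s + 1) := Nat.lt_succ_sqrt _
  have hs3 : 3 ≤ s := Nat.le_sqrt.mpr (by omega)
  set b := (s - 1) / 2 with hb
  have hsb : 2 * b + 1 ≤ s ∧ s ≤ 2 * b + 2 := by omega
  have p1 : (2 * b + 1) * (2 * b + 1) ≤ s * s := Nat.mul_le_mul hsb.1 hsb.1
  have p2 : (s + 1) * (s + 1) ≤ (2 * b + 3) * (2 * b + 3) :=
    Nat.mul_le_mul (by omega) (by omega)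
  have e1 : (2 * b + 1) * (2 * b + 1) = 4 * (b * b) + 4 * b + 1 := by ring
  have e2 : (2 * b + 3) * (2 * b + 3) = 4 * (b * b) + 12 * b + 9 := by ring
  have e3 : (s + 1) * (s + 1) = s * s + 2 * s + 1 := by ring
  have hb1 : 1 ≤ b := by omega
  have hbb : 1 * 1 ≤ b * b := Nat.mul_le_mul hb1 hb1
  exact ⟨b, n - (b * b + b - 1), hb1, by omega, by omega⟩

lemma wx_decomp (b j : ℕ) (hb : 1 ≤ b) (hj : j ≤ 2 * b + 1) :
    wx (b * b + b - 1 + j) = wpos b j := by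
  have hbb : 1 * 1 ≤ b * b := Nat.mul_le_mul hb hb
  have h0 : b * b + b - 1 + j ≠ 0 := by omega
  rw [wx, if_neg h0, wr_eq b j hb hj]
  congr 1
  omega

/-- The explorer's trajectory in the wedge construction: there is a unit-step
lattice path starting at the origin whose range is exactly the wedge
`{(a, b) : 0 ≤ b, −b ≤ a ≤ b}`. -/
theorem wedge_exploration :
    ∃ x : ℕ → ℤ × ℤ, x 0 = (0, 0) ∧
      (∀ n : ℕ, x (n + 1) - x n ∈ UnitMoves) ∧
      Set.range x = {z : ℤ × ℤ | 0 ≤ z.2 ∧ -z.2 ≤ z.1 ∧ z.1 ≤ z.2} := by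
  refine ⟨wx, by simp [wx], ?_, ?_⟩
  · intro n
    rcases Nat.eq_zero_or_pos n with rfl | hn
    · have h1 : wx 1 = wpos 1 0 := wx_decomp 1 0 le_rfl (by omega)
      have h0 : wx 0 = (0, 0) := by simp [wx]
      rw [h1, h0]
      have : wpos 1 0 = ((0 : ℤ), (1 : ℤ)) := by norm_num [wpos]
      rw [this]
      norm_num [UnitMoves]
    · obtain ⟨b, j, hb, hj, rfl⟩ := decomp n hn
      have hx : wx (b * b + b - 1 + j) = wpos b j := wx_decomp b j hb hj
      have hjZ : (j : ℤ) ≤ 2 * (b : ℤ) + 1 := by exact_mod_cast hj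
      rcases eq_or_lt_of_le hj with hj' | hj'
      · -- j = 2b+1 : move north to row b+1
        have hn1 : b * b + b - 1 + j + 1 = (b + 1) * (b + 1) + (b + 1) - 1 + 0 := by
          have hbb : 1 * 1 ≤ b * b := Nat.mul_le_mul hb hb
          have e : (b + 1) * (b + 1) = b * b + 2 * b + 1 := by ring
          omega
        have hx1 : wx (b * b + b - 1 + j + 1) = wpos (b + 1) 0 := by
          rw [hn1]; exact wx_decomp (b + 1) 0 (by omega) (by omega)
        rw [hx, hx1]
        have hjne : j ≠ 0 := by omega
        have hjZ' : (j : ℤ) = 2 * (b : ℤ) + 1 := by exact_mod_cast hj'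
        rcases Nat.even_or_odd b with he | ho
        · have hbm : b % 2 = 0 := Nat.even_iff.mp he
          have hbm1 : (b + 1) % 2 = 1 := by omega
          have w1 : wpos b j = ((j : ℤ) - 1 - b, (b : ℤ)) := by
            simp [wpos, hbm, hjne]
          have w2 : wpos (b + 1) 0 = ((b : ℤ), ((b : ℤ) + 1)) := by
            simp [wpos, hbm1, Prod.ext_iff]
          rw [w1, w2, Prod.mk_sub_mk]
          have c1 : (b : ℤ) - ((j : ℤ) - 1 - b) = 0 := by omega
          have c2 : ((b : ℤ) + 1) - (b : ℤ) = 1 := by ring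
          rw [c1, c2]
          simp [UnitMoves]
        · have hbm : b % 2 = 1 := Nat.odd_iff.mp ho
          have hbm1 : (b + 1) % 2 = 0 := by omega
          have w1 : wpos b j = ((b : ℤ) - j + 1, (b : ℤ)) := by
            simp [wpos, hbm, hjne]
          have w2 : wpos (b + 1) 0 = (1 - ((b : ℤ) + 1), ((b : ℤ) + 1)) := by
            simp [wpos, hbm1, Prod.ext_iff]
          rw [w1, w2, Prod.mk_sub_mk]
          have c1 : 1 - ((b : ℤ) + 1) - ((b : ℤ) - j + 1) = 0 := by omega
          have c2 : ((b : ℤ) + 1) - (b : ℤ) = 1 := by ring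
          rw [c1, c2]
          simp [UnitMoves]
      · -- j < 2b+1 : horizontal move within row b
        have hx1 : wx (b * b + b - 1 + j + 1) = wpos b (j + 1) := by
          have e : b * b + b - 1 + j + 1 = b * b + b - 1 + (j + 1) := by omega
          rw [e]; exact wx_decomp b (j + 1) hb (by omega)
        rw [hx, hx1]
        rcases Nat.even_or_odd b with he | ho
        · have hbm : b % 2 = 0 := Nat.even_iff.mp he
          have w2 : wpos b (j + 1) = (((j : ℤ) + 1) - 1 - b, (b : ℤ)) := by
            simp [wpos, hbm]
          rcases Nat.eq_zero_or_pos j with rfl | hjp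
          · have w1 : wpos b 0 = (1 - (b : ℤ), (b : ℤ)) := by simp [wpos, hbm]
            rw [w1, w2, Prod.mk_sub_mk]
            have c1 : ((0 : ℕ) : ℤ) + 1 - 1 - (b : ℤ) - (1 - (b : ℤ)) = -1 := by
              push_cast; ring
            have c2 : (b : ℤ) - (b : ℤ) = 0 := by ring
            rw [c1, c2]; simp [UnitMoves]
          · have w1 : wpos b j = ((j : ℤ) - 1 - b, (b : ℤ)) := by
              simp [wpos, hbm, Nat.pos_iff_ne_zero.mp hjp]
            rw [w1, w2, Prod.mk_sub_mk]
            have c1 : ((j : ℤ) + 1) - 1 - b - ((j : ℤ) - 1 - b) = 1 := by ring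
            have c2 : (b : ℤ) - (b : ℤ) = 0 := by ring
            rw [c1, c2]; simp [UnitMoves]
        · have hbm : b % 2 = 1 := Nat.odd_iff.mp ho
          have w2 : wpos b (j + 1) = ((b : ℤ) - ((j : ℤ) + 1) + 1, (b : ℤ)) := by
            simp [wpos, hbm]
          rcases Nat.eq_zero_or_pos j with rfl | hjp
          · have w1 : wpos b 0 = ((b : ℤ) - 1, (b : ℤ)) := by simp [wpos, hbm]
            rw [w1, w2, Prod.mk_sub_mk]
            have c1 : (b : ℤ) - (((0 : ℕ) : ℤ) + 1) + 1 - ((b : ℤ) - 1) = 1 := by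
              push_cast; ring
            have c2 : (b : ℤ) - (b : ℤ) = 0 := by ring
            rw [c1, c2]; simp [UnitMoves]
          · have w1 : wpos b j = ((b : ℤ) - j + 1, (b : ℤ)) := by
              simp [wpos, hbm, Nat.pos_iff_ne_zero.mp hjp]
            rw [w1, w2, Prod.mk_sub_mk]
            have c1 : (b : ℤ) - ((j : ℤ) + 1) + 1 - ((b : ℤ) - j + 1) = -1 := by ring
            have c2 : (b : ℤ) - (b : ℤ) = 0 := by ring
            rw [c1, c2]; simp [UnitMoves]
  · ext ⟨a, c⟩
    simp only [Set.mem_range, Set.mem_setOf_eq]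
    constructor
    · rintro ⟨n, h⟩
      have h1 : (wx n).1 = a := by rw [h]
      have h2 : (wx n).2 = c := by rw [h]
      subst h1
      subst h2
      rcases Nat.eq_zero_or_pos n with rfl | hn
      · simp [wx]
      · obtain ⟨b, j, hb, hj, rfl⟩ := decomp n hn
        rw [wx_decomp b j hb hj]
        rcases Nat.even_or_odd b with he | ho
        · have hbm : b % 2 = 0 := Nat.even_iff.mp he
          rcases Nat.eq_zero_or_pos j with rfl | hjp
          · simp [wpos, hbm]; omega
          · simp [wpos, hbm, Nat.pos_iff_ne_zero.mp hjp]; omega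
        · have hbm : b % 2 = 1 := Nat.odd_iff.mp ho
          rcases Nat.eq_zero_or_pos j with rfl | hjp
          · simp [wpos, hbm]; omega
          · simp [wpos, hbm, Nat.pos_iff_ne_zero.mp hjp]; omega
    · rintro ⟨hc, hac, hca⟩
      rcases eq_or_lt_of_le hc with hc0 | hc1
      · refine ⟨0, ?_⟩
        have ha0 : a = 0 := by omega
        have hc0' : c = 0 := by omega
        simp [wx, ha0, hc0']
      · set b := c.toNat with hbdef
        have hbc : (b : ℤ) = c := Int.toNat_of_nonneg hc
        have hb1 : 1 ≤ b := by omega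
        rcases Nat.even_or_odd b with he | ho
        · have hbm : b % 2 = 0 := Nat.even_iff.mp he
          set j := (a + c + 1).toNat with hjdef
          have hjc : (j : ℤ) = a + c + 1 := Int.toNat_of_nonneg (by omega)
          have hj1 : 1 ≤ j := by omega
          have hj2 : j ≤ 2 * b + 1 := by omega
          refine ⟨b * b + b - 1 + j, ?_⟩
          rw [wx_decomp b j hb1 hj2]
          have : wpos b j = ((j : ℤ) - 1 - b, (b : ℤ)) := by
            simp [wpos, hbm, show j ≠ 0 by omega]
          rw [this]
          have e1 : (j : ℤ) - 1 - b = a := by omega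
          rw [e1, hbc]
        · have hbm : b % 2 = 1 := Nat.odd_iff.mp ho
          set j := (c - a + 1).toNat with hjdef
          have hjc : (j : ℤ) = c - a + 1 := Int.toNat_of_nonneg (by omega)
          have hj1 : 1 ≤ j := by omega
          have hj2 : j ≤ 2 * b + 1 := by omega
          refine ⟨b * b + b - 1 + j, ?_⟩
          rw [wx_decomp b j hb1 hj2]
          have : wpos b j = ((b : ℤ) - j + 1, (b : ℤ)) := by
            simp [wpos, hbm, show j ≠ 0 by omega]
          rw [this]
          have e1 : (b : ℤ) - j + 1 = a := by omega
          rw [e1, hbc]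
end
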